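/- When δ₁ = δ₂ = δ, the changepoint limiting degree distribution reduces to the standard one: p⋆_i(u; δ, δ) = p_i(δ) for all i ≥ 1 and u ≥ t⋆. -/

import Mathlib

open Real MeasureTheory

/-- Pmf of a linear birth-immigration process `ξ^j_θ(t)` started at `j`. -/
noncomputable def birthPMF (θ : ℝ) (j i : ℕ) (t : ℝ) : ℝ :=
  Gamma ((i:ℝ) + θ) / (Gamma ((i:ℝ) - (j:ℝ) + 1) * Gamma ((j:ℝ) + θ)) *
    exp (-((j:ℝ) + θ) * t) * (1 - exp (-t))^(i - j)

/-- Tail of a linear birth-immigration process `ξ^j_θ(t)` started at `j`. -/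
noncomputable def birthTail (θ : ℝ) (j i : ℕ) (t : ℝ) : ℝ :=
  Gamma ((i:ℝ) + 1 + θ) / (Gamma ((i:ℝ) - (j:ℝ) + 1) * Gamma ((j:ℝ) + θ)) *
    ∫ x in (0:ℝ)..(1 - exp (-t)), x^(i - j) * (1 - x) ^ ((j:ℝ) - 1 + θ)

/-- Limiting PA degree pmf `p_i(δ)`. -/
noncomputable def pdeg (δ : ℝ) (i : ℕ) : ℝ :=
  (2+δ) * Gamma (3+2*δ) * Gamma ((i:ℝ)+δ) / (Gamma (1+δ) * Gamma ((i:ℝ)+3+2*δ))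

/-- Embedding time elapsed after the changepoint. -/
noncomputable def tauStar (tstar δ₂ u : ℝ) : ℝ := (1/(2+δ₂)) * Real.log (u/tstar)

/-- Limiting degree pmf of the changepoint model `PA(t⋆; δ₁, δ₂)`. -/
noncomputable def pstar (tstar δ₁ δ₂ : ℝ) (i : ℕ) (u : ℝ) : ℝ :=
  pdeg δ₂ i * birthTail (2*δ₂) 3 (i+2) (tauStar tstar δ₂ u) +
    (tstar/u) * ∑ j ∈ Finset.Icc 1 i, pdeg δ₁ j * birthPMF δ₂ j i (tauStar tstar δ₂ u)

/-! ### Auxiliary machinery for the proof -/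

/-- Coefficients appearing in the closed form of the incomplete Beta-type integral. -/
noncomputable def Ccoef (β : ℝ) (i j : ℕ) : ℝ :=
  Gamma i * Gamma (1+β) / (Gamma ((j:ℝ)+1+β) * (Nat.factorial (i-j) : ℝ))

lemma tele_aux (f : ℕ → ℝ) (i : ℕ) :
    ∑ j ∈ Finset.Icc 1 i, (f j - f (j-1)) = f i - f 0 := by
  induction i with
  | zero => simp
  | succ n ih =>
    rw [Finset.sum_Icc_succ_top (by omega : 1 ≤ n+1), ih]
    simp only [Nat.add_sub_cancel]
    ring

lemma Ccoef_succ (β : ℝ) (hβ : 0 < β) (i k : ℕ) (h : k+1 ≤ i) :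
    Ccoef β i (k+1) * (((k:ℝ)+1)+β) = ((i-k:ℕ):ℝ) * Ccoef β i k := by
  unfold Ccoef
  have h0 : ((k:ℝ)+1+β) ≠ 0 := by positivity
  have e1 : ((k+1:ℕ):ℝ)+1+β = ((k:ℝ)+1+β)+1 := by push_cast; ring
  have g1 : Gamma ((k:ℝ)+1+β) ≠ 0 := ne_of_gt (Real.Gamma_pos_of_pos (by positivity))
  set m := i - (k+1) with hm
  have hik2 : i - k = m + 1 := by omega
  have f1 : ((m).factorial : ℝ) ≠ 0 := Nat.cast_ne_zero.mpr (Nat.factorial_ne_zero _)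
  have hm1 : ((m:ℝ)+1) ≠ 0 := by positivity
  rw [e1, Real.Gamma_add_one h0, hik2, Nat.factorial_succ]
  push_cast
  field_simp

lemma key_integral (β : ℝ) (hβ : 0 < β) (i : ℕ) (hi : 1 ≤ i) (s : ℝ)
    (hs0 : 0 ≤ s) (hs1 : s < 1) :
    ∫ x in (0:ℝ)..s, x^(i-1) * (1-x)^β
      = Gamma i * Gamma (1+β) / Gamma ((i:ℝ)+1+β)
        - ∑ j ∈ Finset.Icc 1 i, Ccoef β i j * s^(i-j) * (1-s)^((j:ℝ)+β) := by
  have hderiv : ∀ x ∈ Set.uIcc (0:ℝ) s,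
      HasDerivAt (fun y => -∑ j ∈ Finset.Icc 1 i, Ccoef β i j * y^(i-j) * (1-y)^((j:ℝ)+β))
        (x^(i-1) * (1-x)^β) x := by
    intro x hx
    rw [Set.uIcc_of_le hs0] at hx
    have hx1 : (0:ℝ) < 1 - x := by
      have := hx.2; linarith
    have hterm : ∀ j ∈ Finset.Icc 1 i,
        HasDerivAt (fun y => Ccoef β i j * y^(i-j) * (1-y)^((j:ℝ)+β))
          (Ccoef β i j * (↑(i-j) * x^(i-j-1)) * (1-x)^((j:ℝ)+β)
            + Ccoef β i j * x^(i-j) * ((((j:ℝ)+β) * (1-x)^((j:ℝ)+β-1)) * (-1))) x := by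
      intro j hj
      have h1 : HasDerivAt (fun y : ℝ => Ccoef β i j * y^(i-j))
          (Ccoef β i j * (↑(i-j) * x^(i-j-1))) x := (hasDerivAt_pow (i-j) x).const_mul _
      have hb : HasDerivAt (fun y : ℝ => 1 - y) (-1) x := (hasDerivAt_id x).const_sub 1
      have h2 : HasDerivAt (fun y : ℝ => (1-y)^((j:ℝ)+β))
          ((((j:ℝ)+β) * (1-x)^((j:ℝ)+β-1)) * (-1)) x :=
        (Real.hasDerivAt_rpow_const (Or.inl (ne_of_gt hx1))).comp x hb
      exact h1.mul h2
    have hneg := (HasDerivAt.sum hterm).neg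
    have hval : -(∑ j ∈ Finset.Icc 1 i, (Ccoef β i j * (↑(i-j) * x^(i-j-1)) * (1-x)^((j:ℝ)+β)
          + Ccoef β i j * x^(i-j) * ((((j:ℝ)+β) * (1-x)^((j:ℝ)+β-1)) * (-1))))
        = x^(i-1) * (1-x)^β := by
      set f : ℕ → ℝ := fun k => ((i-k:ℕ):ℝ) * Ccoef β i k * x^(i-k-1) * (1-x)^((k:ℝ)+β) with hf
      have hsc : ∀ j ∈ Finset.Icc 1 i, (Ccoef β i j * (↑(i-j) * x^(i-j-1)) * (1-x)^((j:ℝ)+β)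
          + Ccoef β i j * x^(i-j) * ((((j:ℝ)+β) * (1-x)^((j:ℝ)+β-1)) * (-1)))
          = f j - f (j-1) := by
        intro j hj
        rw [Finset.mem_Icc] at hj
        obtain ⟨k, rfl⟩ : ∃ k, j = k+1 := ⟨j-1, by omega⟩
        have hk : k+1 ≤ i := hj.2
        have hco := Ccoef_succ β hβ i k hk
        simp only [hf, Nat.add_sub_cancel]
        rw [show ((k+1:ℕ):ℝ)+β-1 = (k:ℝ)+β by push_cast; ring]
        rw [show i - (k+1) = i - k - 1 from by omega]
        push_cast at hco ⊢
        linear_combination (-(x^(i-k-1) * (1-x)^((k:ℝ)+β))) * hco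
      rw [Finset.sum_congr rfl hsc, tele_aux f i]
      have hfi : f i = 0 := by simp [hf]
      have hf0 : f 0 = x^(i-1) * (1-x)^β := by
        obtain ⟨m, rfl⟩ : ∃ m, i = m+1 := ⟨i-1, by omega⟩
        simp only [hf, Nat.sub_zero, Nat.cast_zero, zero_add]
        unfold Ccoef
        rw [show ((0:ℕ):ℝ)+1+β = 1+β by push_cast; ring]
        rw [Nat.sub_zero, show ((m+1:ℕ):ℝ) = (m:ℝ)+1 by push_cast; ring,
          Real.Gamma_nat_eq_factorial m, Nat.factorial_succ]
        have g1 : Gamma (1+β) ≠ 0 := ne_of_gt (Real.Gamma_pos_of_pos (by positivity))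
        have f1 : ((m).factorial : ℝ) ≠ 0 := Nat.cast_ne_zero.mpr (Nat.factorial_ne_zero _)
        have hm1 : ((m:ℝ)+1) ≠ 0 := by positivity
        push_cast
        field_simp
      rw [hfi, hf0]
      ring
    rw [← hval]
    exact hneg.congr_of_eventuallyEq (Filter.Eventually.of_forall fun y => by
      simp [Finset.sum_apply])
  have hcont : ContinuousOn (fun x : ℝ => x^(i-1) * (1-x)^β) (Set.uIcc 0 s) := by
    apply ContinuousOn.mul ((continuous_pow _).continuousOn)
    apply ContinuousOn.rpow_const ((continuous_const.sub continuous_id).continuousOn)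
    intro x hx
    left
    rw [Set.uIcc_of_le hs0] at hx
    have := hx.2
    intro hc
    simp only [Pi.sub_apply, id] at hc
    nlinarith
  rw [intervalIntegral.integral_eq_sub_of_hasDerivAt hderiv hcont.intervalIntegrable]
  have hΦ0 : (∑ j ∈ Finset.Icc 1 i, Ccoef β i j * (0:ℝ)^(i-j) * (1-(0:ℝ))^((j:ℝ)+β))
      = Gamma i * Gamma (1+β) / Gamma ((i:ℝ)+1+β) := by
    rw [Finset.sum_eq_single i]
    · simp only [Nat.sub_self, pow_zero, mul_one, sub_zero, Real.one_rpow]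
      unfold Ccoef
      simp [Nat.sub_self]
    · intro j hj hji
      rw [Finset.mem_Icc] at hj
      rw [zero_pow (by omega : i - j ≠ 0)]
      ring
    · intro hmem
      exact absurd (Finset.mem_Icc.mpr ⟨hi, le_refl i⟩) hmem
  rw [hΦ0]
  ring

lemma term_eval (δ : ℝ) (hδ : -1 < δ) (i j : ℕ) (hj1 : 1 ≤ j) (hji : j ≤ i) (hi : 1 ≤ i)
    (t : ℝ) :
    exp (-((2+δ)*t)) * (pdeg δ j * birthPMF δ j i t) =
      pdeg δ i * ((Gamma ((i:ℝ)+3+2*δ)/(Gamma ((i:ℝ))*Gamma (3+2*δ))) *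
        (Ccoef (2+2*δ) i j * (1 - exp (-t))^(i-j) * (exp (-t))^((j:ℝ)+(2+2*δ)))) := by
  unfold pdeg birthPMF Ccoef
  have hsplit : (exp (-t))^((j:ℝ)+(2+2*δ))
      = exp (-((j:ℝ)+δ) * t) * exp (-((2+δ)*t)) := by
    rw [show ((j:ℝ)+(2+2*δ)) = ((j:ℝ)+δ) + (2+δ) by ring,
      Real.rpow_add (exp_pos _), Real.rpow_def_of_pos (exp_pos _),
      Real.rpow_def_of_pos (exp_pos _), Real.log_exp]
    rw [← Real.exp_add, ← Real.exp_add]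
    congr 1
    ring
  rw [hsplit]
  have hcast : (i:ℝ) - (j:ℝ) + 1 = ((i-j:ℕ):ℝ) + 1 := by
    rw [Nat.cast_sub hji]
  rw [hcast, Real.Gamma_nat_eq_factorial]
  rw [show (1:ℝ)+(2+2*δ) = 3+2*δ by ring]
  rw [show (j:ℝ)+1+(2+2*δ) = (j:ℝ)+3+2*δ by ring]
  have g1 : Gamma (1+δ) ≠ 0 := ne_of_gt (Real.Gamma_pos_of_pos (by linarith))
  have g2 : Gamma (3+2*δ) ≠ 0 := ne_of_gt (Real.Gamma_pos_of_pos (by linarith))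
  have hi0 : (0:ℝ) ≤ (i:ℝ) := Nat.cast_nonneg i
  have hj0 : (0:ℝ) ≤ (j:ℝ) := Nat.cast_nonneg j
  have g3 : Gamma ((i:ℝ)+3+2*δ) ≠ 0 := ne_of_gt (Real.Gamma_pos_of_pos (by linarith))
  have g4 : Gamma ((j:ℝ)+3+2*δ) ≠ 0 := ne_of_gt (Real.Gamma_pos_of_pos (by linarith))
  have g5 : Gamma ((j:ℝ)+δ) ≠ 0 := by
    refine ne_of_gt (Real.Gamma_pos_of_pos ?_)
    have : (1:ℝ) ≤ (j:ℝ) := by exact_mod_cast hj1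
    linarith
  have g6 : Gamma ((i:ℝ)) ≠ 0 := by
    refine ne_of_gt (Real.Gamma_pos_of_pos ?_)
    have : (1:ℝ) ≤ (i:ℝ) := by exact_mod_cast hi
    linarith
  have f1 : ((i-j).factorial : ℝ) ≠ 0 := Nat.cast_ne_zero.mpr (Nat.factorial_ne_zero _)
  field_simp

/-- With no actual change (`δ₁ = δ₂ = δ`), the changepoint limiting pmf reduces to
the standard limiting PA degree distribution. -/
theorem changepoint_pmf_no_change (tstar δ u : ℝ) (hδ : -1 < δ) (hts : 0 < tstar)
    (hu : tstar ≤ u) (i : ℕ) (hi : 1 ≤ i) :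
    pstar tstar δ δ i u = pdeg δ i := by
  have h2δ : (0:ℝ) < 2+δ := by linarith
  have hu0 : (0:ℝ) < u := lt_of_lt_of_le hts hu
  set t : ℝ := tauStar tstar δ u with htdef
  have ht0 : 0 ≤ t := by
    rw [htdef]; unfold tauStar
    have h1 : (1:ℝ) ≤ u / tstar := (one_le_div hts).mpr hu
    have := Real.log_nonneg h1
    positivity
  have hexp1 : exp (-t) ≤ 1 := by
    calc exp (-t) ≤ exp 0 := Real.exp_le_exp.mpr (by linarith)
    _ = 1 := Real.exp_zero
  have hs0 : (0:ℝ) ≤ 1 - exp (-t) := by linarith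
  have hs1 : 1 - exp (-t) < 1 := by have := Real.exp_pos (-t); linarith
  have htu : tstar / u = exp (-((2+δ)*t)) := by
    have hlog : (2+δ)*t = Real.log (u/tstar) := by
      rw [htdef]; unfold tauStar; field_simp
    rw [hlog, Real.exp_neg, Real.exp_log (by positivity), inv_div]
  have hβ : (0:ℝ) < 2+2*δ := by linarith
  have g2 : Gamma (3+2*δ) ≠ 0 := ne_of_gt (Real.Gamma_pos_of_pos (by linarith))
  have hi0 : (1:ℝ) ≤ (i:ℝ) := by exact_mod_cast hi
  have g3 : Gamma ((i:ℝ)+3+2*δ) ≠ 0 := ne_of_gt (Real.Gamma_pos_of_pos (by linarith))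
  have g6 : Gamma ((i:ℝ)) ≠ 0 := ne_of_gt (Real.Gamma_pos_of_pos (by linarith))
  have hTail : birthTail (2*δ) 3 (i+2) t
      = 1 - ∑ j ∈ Finset.Icc 1 i, (Gamma ((i:ℝ)+3+2*δ)/(Gamma ((i:ℝ))*Gamma (3+2*δ))) *
          (Ccoef (2+2*δ) i j * (1-exp (-t))^(i-j) * (exp (-t))^((j:ℝ)+(2+2*δ))) := by
    unfold birthTail
    rw [show ((i+2:ℕ):ℝ) + 1 + 2*δ = (i:ℝ)+3+2*δ by push_cast; ring]
    rw [show ((i+2:ℕ):ℝ) - ((3:ℕ):ℝ) + 1 = (i:ℝ) by push_cast; ring]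
    rw [show ((3:ℕ):ℝ) + 2*δ = 3+2*δ by push_cast; ring]
    rw [show ((3:ℕ):ℝ) - 1 + 2*δ = 2+2*δ by push_cast; ring]
    rw [show i+2-3 = i-1 from by omega]
    rw [key_integral (2+2*δ) hβ i hi _ hs0 hs1]
    rw [show (1:ℝ)+(2+2*δ) = 3+2*δ by ring, show (i:ℝ)+1+(2+2*δ) = (i:ℝ)+3+2*δ by ring]
    rw [show (1:ℝ) - (1 - exp (-t)) = exp (-t) by ring]
    rw [mul_sub, Finset.mul_sum]
    congr 1
    field_simp
  have hSum : (tstar/u) * ∑ j ∈ Finset.Icc 1 i, pdeg δ j * birthPMF δ j i t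
      = ∑ j ∈ Finset.Icc 1 i, pdeg δ i *
          ((Gamma ((i:ℝ)+3+2*δ)/(Gamma ((i:ℝ))*Gamma (3+2*δ))) *
            (Ccoef (2+2*δ) i j * (1-exp (-t))^(i-j) * (exp (-t))^((j:ℝ)+(2+2*δ)))) := by
    rw [htu, Finset.mul_sum]
    refine Finset.sum_congr rfl (fun j hj => ?_)
    rw [Finset.mem_Icc] at hj
    exact term_eval δ hδ i j hj.1 hj.2 hi t
  have hfac : ∑ j ∈ Finset.Icc 1 i, pdeg δ i *
      ((Gamma ((i:ℝ)+3+2*δ)/(Gamma ((i:ℝ))*Gamma (3+2*δ))) *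
        (Ccoef (2+2*δ) i j * (1-exp (-t))^(i-j) * (exp (-t))^((j:ℝ)+(2+2*δ))))
      = pdeg δ i * ∑ j ∈ Finset.Icc 1 i,
        ((Gamma ((i:ℝ)+3+2*δ)/(Gamma ((i:ℝ))*Gamma (3+2*δ))) *
          (Ccoef (2+2*δ) i j * (1-exp (-t))^(i-j) * (exp (-t))^((j:ℝ)+(2+2*δ)))) :=
    (Finset.mul_sum _ _ _).symm
  unfold pstar
  rw [← htdef, hTail, hSum, hfac]
  ring
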